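/- Let f : ℝⁿ → ℝ be a C² function, c ∈ ℝ and ε > 0, and assume ∇f(x) ≠ 0 for every x with |f(x) − c| < ε. Suppose there exist a symmetric positive definite n×n real matrix A, a constant γ ∈ (0,1) and R > 0 such that for every x ∈ ℝⁿ with |f(x) − c| < ε and ⟨Ax, x⟩^{1/2} ≥ R one has |⟨∇f(x)/‖∇f(x)‖, Ax/‖Ax‖⟩| ≤ γ. Then f is locally trivial over a neighbourhood of c: there exist δ with 0 < δ ≤ ε and a homeomorphism Φ : f⁻¹((c−δ, c+δ)) → (c−δ, c+δ) × f⁻¹(c) whose first component is f. In particular c is not a bifurcation value of f. -/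

import Mathlib

open Filter Topology
open scoped RealInnerProductSpace

/-- The action of an `n × n` real matrix on Euclidean space `ℝⁿ`. -/
noncomputable def matApply {n : ℕ} (A : Matrix (Fin n) (Fin n) ℝ)
    (x : EuclideanSpace ℝ (Fin n)) : EuclideanSpace ℝ (Fin n) :=
  (EuclideanSpace.equiv (Fin n) ℝ).symm (A.mulVec (EuclideanSpace.equiv (Fin n) ℝ x))

set_option maxHeartbeats 1000000

open Set Filter Topology
open scoped RealInnerProductSpace

namespace Statement14Aux

variable {E : Type*} [NormedAddCommGroup E] [NormedSpace ℝ E] [CompleteSpace E]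

/-- One Picard–Lindelöf step of length 1 on each side. -/
lemma step_sol {v : E → E} {K : NNReal} {C : ℝ} (hl : LipschitzWith K v)
    (hb : ∀ x, ‖v x‖ ≤ C) (hC : 0 ≤ C) (t₀ : ℝ) (x₀ : E) :
    ∃ γ : ℝ → E, γ t₀ = x₀ ∧ ∀ t ∈ Icc (t₀ - 1) (t₀ + 1),
      HasDerivWithinAt γ (v (γ t)) (Icc (t₀ - 1) (t₀ + 1)) t := by
  have hpl : IsPicardLindelof (fun _ : ℝ => v) (tmin := t₀ - 1) (tmax := t₀ + 1)
      ⟨t₀, by constructor <;> linarith⟩ x₀ ⟨C, hC⟩ 0 ⟨C, hC⟩ K :=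
    IsPicardLindelof.of_time_independent (fun x _ => hb x) hl.lipschitzOnWith (by
        have h : max (t₀ + 1 - t₀) (t₀ - (t₀ - 1)) = 1 := by
          rw [show t₀ + 1 - t₀ = 1 by ring, show t₀ - (t₀ - 1) = 1 by ring, max_self]
        simp only [NNReal.coe_mk, NNReal.coe_zero, sub_zero]
        rw [h, mul_one])
  exact hpl.exists_eq_forall_mem_Icc_hasDerivWithinAt₀

/-- Glue two solutions defined on adjacent closed intervals. -/
lemma glue_sol {v : E → E} {a b c : ℝ} (hab : a ≤ b) (hbc : b ≤ c) {γ₁ γ₂ : ℝ → E}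
    (h₁ : ∀ t ∈ Icc a b, HasDerivWithinAt γ₁ (v (γ₁ t)) (Icc a b) t)
    (h₂ : ∀ t ∈ Icc b c, HasDerivWithinAt γ₂ (v (γ₂ t)) (Icc b c) t)
    (heq : γ₁ b = γ₂ b) :
    ∃ γ : ℝ → E, (∀ t, t ≤ b → γ t = γ₁ t) ∧ (∀ t, b ≤ t → γ t = γ₂ t) ∧
      ∀ t ∈ Icc a c, HasDerivWithinAt γ (v (γ t)) (Icc a c) t := by
  set γ : ℝ → E := fun t => if t ≤ b then γ₁ t else γ₂ t with hγ
  have hle : ∀ t, t ≤ b → γ t = γ₁ t := fun t ht => if_pos ht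
  have hge : ∀ t, b ≤ t → γ t = γ₂ t := by
    intro t ht
    rcases eq_or_lt_of_le ht with h | h
    · simp only [hγ, ← h, le_refl, if_pos, heq]
    · exact if_neg (not_le.2 h)
  refine ⟨γ, hle, hge, fun t ht => ?_⟩
  rcases lt_trichotomy t b with h | h | h
  · have hmem : Icc a b ∈ 𝓝[Icc a c] t :=
      mem_nhdsWithin.2 ⟨Iio b, isOpen_Iio, h, fun s hs => ⟨hs.2.1, le_of_lt hs.1⟩⟩
    have hd : HasDerivWithinAt γ₁ (v (γ₁ t)) (Icc a c) t :=
      (h₁ t ⟨ht.1, le_of_lt h⟩).mono_of_mem_nhdsWithin hmem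
    have he : γ =ᶠ[𝓝[Icc a c] t] γ₁ := by
      filter_upwards [hmem] with s hs using hle s hs.2
    have h' := hd.congr_of_eventuallyEq he (hle t h.le)
    rwa [hle t h.le]
  · subst h
    have d₁ : HasDerivWithinAt γ (v (γ t)) (Icc a t) t := by
      have h' := (h₁ t ⟨ht.1, le_rfl⟩).congr (fun s hs => hle s hs.2) (hle t le_rfl)
      rwa [hle t le_rfl]
    have d₂ : HasDerivWithinAt γ (v (γ t)) (Icc t c) t := by
      have h' := (h₂ t ⟨le_rfl, hbc⟩).congr (fun s hs => hge s hs.1) (hge t le_rfl)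
      rwa [hge t le_rfl]
    have h' := d₁.union d₂
    rwa [Icc_union_Icc_eq_Icc hab hbc] at h'
  · have hmem : Icc b c ∈ 𝓝[Icc a c] t :=
      mem_nhdsWithin.2 ⟨Ioi b, isOpen_Ioi, h, fun s hs => ⟨le_of_lt hs.1, hs.2.2⟩⟩
    have hd : HasDerivWithinAt γ₂ (v (γ₂ t)) (Icc a c) t :=
      (h₂ t ⟨le_of_lt h, ht.2⟩).mono_of_mem_nhdsWithin hmem
    have he : γ =ᶠ[𝓝[Icc a c] t] γ₂ := by
      filter_upwards [hmem] with s hs using hge s hs.1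
    have h' := hd.congr_of_eventuallyEq he (hge t h.le)
    rwa [hge t h.le]

/-- Solutions on `Icc (-(k+1)) (k+1)` for every `k`. -/
lemma sol_Icc {v : E → E} {K : NNReal} {C : ℝ} (hl : LipschitzWith K v)
    (hb : ∀ x, ‖v x‖ ≤ C) (hC : 0 ≤ C) (x₀ : E) (k : ℕ) :
    ∃ γ : ℝ → E, γ 0 = x₀ ∧ ∀ t ∈ Icc (-(k + 1) : ℝ) (k + 1),
      HasDerivWithinAt γ (v (γ t)) (Icc (-(k + 1) : ℝ) (k + 1)) t := by
  induction k with
  | zero =>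
    obtain ⟨γ, h0, hd⟩ := step_sol hl hb hC 0 x₀
    rw [show (0 - 1 : ℝ) = -1 by ring, show (0 + 1 : ℝ) = 1 by ring] at hd
    norm_num
    exact ⟨γ, h0, fun t h1 h2 => hd t ⟨h1, h2⟩⟩
  | succ k ih =>
    obtain ⟨γ, h0, hd⟩ := ih
    have hk1 : ((k + 1 : ℕ) : ℝ) = (k : ℝ) + 1 := by push_cast; ring
    rw [hk1]
    set a : ℝ := -((k : ℝ) + 1) with ha
    set b : ℝ := (k : ℝ) + 1 with hb'
    have hab : a ≤ b := by rw [ha, hb']; have : (0:ℝ) ≤ k := Nat.cast_nonneg k; linarith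
    -- extend to the right
    obtain ⟨η, hη0, hηd⟩ := step_sol hl hb hC b (γ b)
    have hηd' : ∀ t ∈ Icc b (b + 1), HasDerivWithinAt η (v (η t)) (Icc b (b + 1)) t :=
      fun t ht => (hηd t ⟨by linarith [ht.1], ht.2⟩).mono (Icc_subset_Icc (by linarith) le_rfl)
    obtain ⟨γ₂, hγ₂l, hγ₂r, hγ₂d⟩ := glue_sol hab (by linarith : b ≤ b + 1) hd hηd' hη0.symm
    -- extend to the left
    obtain ⟨ζ, hζ0, hζd⟩ := step_sol hl hb hC a (γ₂ a)
    have hζd' : ∀ t ∈ Icc (a - 1) a, HasDerivWithinAt ζ (v (ζ t)) (Icc (a - 1) a) t :=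
      fun t ht => (hζd t ⟨ht.1, by linarith [ht.2]⟩).mono (Icc_subset_Icc le_rfl (by linarith))
    obtain ⟨γ₃, hγ₃l, hγ₃r, hγ₃d⟩ := glue_sol (by linarith : a - 1 ≤ a)
      (by linarith : a ≤ b + 1) hζd' hγ₂d hζ0
    have hk0 : (0:ℝ) ≤ (k : ℝ) := Nat.cast_nonneg k
    have h0' : γ₃ 0 = x₀ := by
      rw [hγ₃r 0 (by rw [ha]; linarith), hγ₂l 0 (by rw [hb']; linarith), h0]
    rw [show (-((k:ℝ) + 1 + 1)) = a - 1 by rw [ha]; ring,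
        show ((k:ℝ) + 1 + 1) = b + 1 by rw [hb']]
    exact ⟨γ₃, h0', hγ₃d⟩

/-- Global existence of integral curves for a bounded Lipschitz vector field. -/
lemma exists_global_sol {v : E → E} {K : NNReal} {C : ℝ} (hl : LipschitzWith K v)
    (hb : ∀ x, ‖v x‖ ≤ C) (hC : 0 ≤ C) (x₀ : E) :
    ∃ γ : ℝ → E, γ 0 = x₀ ∧ ∀ t, HasDerivAt γ (v (γ t)) t := by
  have H : ∀ k : ℕ, ∃ γ : ℝ → E, γ 0 = x₀ ∧ ∀ t ∈ Icc (-(k + 1) : ℝ) (k + 1),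
      HasDerivWithinAt γ (v (γ t)) (Icc (-(k + 1) : ℝ) (k + 1)) t := sol_Icc hl hb hC x₀
  choose Γ hΓ0 hΓd using H
  have hΓat : ∀ k : ℕ, ∀ t : ℝ, |t| < k + 1 → HasDerivAt (Γ k) (v (Γ k t)) t := by
    intro k t ht
    have h' := abs_lt.1 ht
    exact (hΓd k t ⟨by linarith [h'.1], by linarith [h'.2]⟩).hasDerivAt
      (Icc_mem_nhds (by linarith [h'.1]) (by linarith [h'.2]))
  -- coherence
  have hcoh : ∀ j k : ℕ, ∀ t : ℝ, |t| ≤ j → |t| ≤ k → Γ j t = Γ k t := by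
    intro j k t hj hk
    have habs : (0:ℝ) ≤ |t| := abs_nonneg t
    set m : ℝ := min (j:ℝ) (k:ℝ) + 1 with hm
    have hmin0 : (0:ℝ) ≤ min (j:ℝ) k := le_min (Nat.cast_nonneg j) (Nat.cast_nonneg k)
    have hm0 : 0 < m := by rw [hm]; linarith
    have hmj : m ≤ (j:ℝ) + 1 := by rw [hm]; linarith [min_le_left (j:ℝ) (k:ℝ)]
    have hmk : m ≤ (k:ℝ) + 1 := by rw [hm]; linarith [min_le_right (j:ℝ) (k:ℝ)]
    have hcont : ∀ i : ℕ, m ≤ (i:ℝ) + 1 → ContinuousOn (Γ i) (Icc (-m) m) := by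
      intro i hi
      intro s hs
      have hsj : s ∈ Icc (-((i:ℝ) + 1)) ((i:ℝ) + 1) :=
        ⟨by linarith [hs.1], by linarith [hs.2]⟩
      exact ((hΓd i s hsj).continuousWithinAt).mono
        (Icc_subset_Icc (by linarith) (by linarith))
    have hderiv : ∀ i : ℕ, m ≤ (i:ℝ) + 1 → ∀ s ∈ Ioo (-m) m,
        HasDerivAt (Γ i) (v (Γ i s)) s := by
      intro i hi s hs
      apply hΓat
      rw [abs_lt]
      exact ⟨by linarith [hs.1], by linarith [hs.2]⟩
    have key : EqOn (Γ j) (Γ k) (Icc (-m) m) :=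
      ODE_solution_unique_of_mem_Icc (v := fun _ => v) (s := fun _ => univ)
        (fun _ _ => hl.lipschitzOnWith) (t₀ := 0) ⟨by linarith, by linarith⟩
        (hcont j hmj) (hderiv j hmj) (fun _ _ => trivial)
        (hcont k hmk) (hderiv k hmk) (fun _ _ => trivial)
        (by rw [hΓ0, hΓ0])
    apply key
    have h' : |t| ≤ m := by rw [hm]; exact le_trans (le_min hj hk) (by linarith)
    rw [abs_le] at h'
    exact ⟨h'.1, h'.2⟩
  refine ⟨fun t => Γ ⌈|t|⌉₊ t, by
    show Γ ⌈|(0:ℝ)|⌉₊ 0 = x₀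
    rw [show ⌈|(0:ℝ)|⌉₊ = 0 by norm_num]
    exact hΓ0 0, ?_⟩
  intro t
  set k₀ : ℕ := ⌈|t|⌉₊ + 1 with hk₀
  have hceil : |t| ≤ (⌈|t|⌉₊ : ℝ) := Nat.le_ceil _
  have h1 : HasDerivAt (Γ k₀) (v (Γ k₀ t)) t := by
    apply hΓat
    rw [hk₀]; push_cast; linarith
  have heq : (fun s => Γ ⌈|s|⌉₊ s) =ᶠ[𝓝 t] Γ k₀ := by
    have hmem : {s : ℝ | |s| < |t| + 1} ∈ 𝓝 t :=
      (isOpen_lt continuous_abs continuous_const).mem_nhds (by simp)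
    filter_upwards [hmem] with s hs
    exact hcoh _ _ _ (Nat.le_ceil _) (by rw [hk₀]; push_cast; linarith [hs])
  have h2 := h1.congr_of_eventuallyEq heq
  have h3 : Γ k₀ t = Γ ⌈|t|⌉₊ t :=
    hcoh _ _ _ (by rw [hk₀]; push_cast; linarith) (Nat.le_ceil _)
  rw [h3] at h2
  exact h2


lemma global_sol_unique {v : E → E} {K : NNReal} (hl : LipschitzWith K v) {γ₁ γ₂ : ℝ → E}
    (h₁ : ∀ t, HasDerivAt γ₁ (v (γ₁ t)) t) (h₂ : ∀ t, HasDerivAt γ₂ (v (γ₂ t)) t)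
    (h0 : γ₁ 0 = γ₂ 0) : ∀ t, γ₁ t = γ₂ t := by
  intro t
  have habs : (0:ℝ) ≤ |t| := abs_nonneg t
  have key : EqOn γ₁ γ₂ (Icc (-(|t|+1)) (|t|+1)) :=
    ODE_solution_unique_of_mem_Icc (v := fun _ => v) (s := fun _ => univ)
      (fun _ _ => hl.lipschitzOnWith) (t₀ := 0) ⟨by linarith, by linarith⟩
      (fun s _ => (h₁ s).continuousAt.continuousWithinAt)
      (fun s _ => h₁ s) (fun _ _ => trivial)
      (fun s _ => (h₂ s).continuousAt.continuousWithinAt)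
      (fun s _ => h₂ s) (fun _ _ => trivial) h0
  exact key ⟨by linarith [neg_abs_le t], by linarith [le_abs_self t]⟩

lemma global_sol_dist {v : E → E} {K : NNReal} (hl : LipschitzWith K v) {γ₁ γ₂ : ℝ → E}
    (h₁ : ∀ t, HasDerivAt γ₁ (v (γ₁ t)) t) (h₂ : ∀ t, HasDerivAt γ₂ (v (γ₂ t)) t) (t : ℝ) :
    dist (γ₁ t) (γ₂ t) ≤ dist (γ₁ 0) (γ₂ 0) * Real.exp (K * |t|) := by
  rcases le_total 0 t with h | h
  · have key := dist_le_of_trajectories_ODE (v := fun _ => v) (a := 0) (b := t)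
      (fun _ => hl)
      (fun s _ => (h₁ s).continuousAt.continuousWithinAt)
      (fun s _ => (h₁ s).hasDerivWithinAt)
      (fun s _ => (h₂ s).continuousAt.continuousWithinAt)
      (fun s _ => (h₂ s).hasDerivWithinAt)
      (le_refl _) t ⟨h, le_rfl⟩
    rw [sub_zero] at key
    rwa [abs_of_nonneg h]
  · set w : E → E := fun y => -(v y) with hw
    have hlw : LipschitzWith K w := by
      have := hl.neg
      exact this
    have d : ∀ (γ : ℝ → E), (∀ u, HasDerivAt γ (v (γ u)) u) →
        ∀ s, HasDerivAt (fun u => γ (-u)) (w (γ (-s))) s := by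
      intro γ hγ s
      have h' := HasDerivAt.scomp s (hγ (-s)) (hasDerivAt_neg s)
      have : ((-1 : ℝ) • v (γ (-s))) = w (γ (-s)) := by rw [hw]; simp
      rw [this] at h'
      exact h'
    have key := dist_le_of_trajectories_ODE (v := fun _ => w) (a := 0) (b := -t)
      (fun _ => hlw)
      (fun s _ => ((d γ₁ h₁ s).continuousAt.continuousWithinAt))
      (fun s _ => (d γ₁ h₁ s).hasDerivWithinAt)
      (fun s _ => ((d γ₂ h₂ s).continuousAt.continuousWithinAt))
      (fun s _ => (d γ₂ h₂ s).hasDerivWithinAt)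
      (le_refl _) (-t) ⟨by linarith, le_rfl⟩
    simp only [neg_neg, neg_zero, sub_zero] at key
    rwa [abs_of_nonpos h]

lemma sol_time_lip {v : E → E} {C : ℝ} (hb : ∀ x, ‖v x‖ ≤ C) {γ : ℝ → E}
    (hd : ∀ t, HasDerivAt γ (v (γ t)) t) (s t : ℝ) : dist (γ s) (γ t) ≤ C * |s - t| := by
  have key := Convex.norm_image_sub_le_of_norm_hasDerivWithin_le (f := γ)
    (f' := fun u => v (γ u)) (s := univ) (fun u _ => (hd u).hasDerivWithinAt)
    (fun u _ => hb _) convex_univ (mem_univ t) (mem_univ s)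
  simpa [dist_eq_norm, Real.norm_eq_abs] using key

lemma flow_cont {v : E → E} {K : NNReal} {C : ℝ} (hl : LipschitzWith K v)
    (hb : ∀ x, ‖v x‖ ≤ C) (hC : 0 ≤ C) {φ : E → ℝ → E}
    (hφd : ∀ x t, HasDerivAt (φ x) (v (φ x t)) t) (hφ0 : ∀ x, φ x 0 = x) :
    Continuous fun p : ℝ × E => φ p.2 p.1 := by
  rw [continuous_iff_continuousAt]
  rintro ⟨t₀, x₀⟩
  rw [Metric.continuousAt_iff]
  intro εp hεp
  set B : ℝ := Real.exp (K * (|t₀| + 1)) with hBdef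
  have hB : 0 < B := Real.exp_pos _
  refine ⟨min 1 (min (εp / (2*(C+1))) (εp / (2*B))), by positivity, ?_⟩
  rintro ⟨t, x⟩ hd
  simp only [Prod.dist_eq] at hd
  have hdt : dist t t₀ < min 1 (min (εp / (2*(C+1))) (εp / (2*B))) :=
    lt_of_le_of_lt (le_max_left _ _) hd
  have hdx : dist x x₀ < min 1 (min (εp / (2*(C+1))) (εp / (2*B))) :=
    lt_of_le_of_lt (le_max_right _ _) hd
  have hdt1 : dist t t₀ < 1 := lt_of_lt_of_le hdt (min_le_left _ _)
  have hdt2 : dist t t₀ < εp / (2*(C+1)) :=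
    lt_of_lt_of_le hdt (le_trans (min_le_right _ _) (min_le_left _ _))
  have hdx2 : dist x x₀ < εp / (2*B) :=
    lt_of_lt_of_le hdx (le_trans (min_le_right _ _) (min_le_right _ _))
  have htabs : |t| ≤ |t₀| + 1 := by
    have h' : |t - t₀| < 1 := by rwa [Real.dist_eq] at hdt1
    calc |t| = |t₀ + (t - t₀)| := by ring_nf
    _ ≤ |t₀| + |t - t₀| := abs_add_le _ _
    _ ≤ |t₀| + 1 := by linarith
  have hgron : dist (φ x t) (φ x₀ t) ≤ dist x x₀ * B := by
    have key := global_sol_dist hl (hφd x) (hφd x₀) t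
    rw [hφ0, hφ0] at key
    refine le_trans key (mul_le_mul_of_nonneg_left ?_ dist_nonneg)
    rw [hBdef]
    exact Real.exp_le_exp.2 (mul_le_mul_of_nonneg_left htabs K.coe_nonneg)
  have htime : dist (φ x₀ t) (φ x₀ t₀) ≤ C * |t - t₀| := sol_time_lip hb (hφd x₀) t t₀
  have h1 : dist x x₀ * B < εp / 2 := by
    have := (mul_lt_mul_of_pos_right hdx2 hB)
    calc dist x x₀ * B < εp / (2*B) * B := this
    _ = εp / 2 := by field_simp
  have h2 : C * |t - t₀| < εp / 2 := by
    rw [← Real.dist_eq]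
    calc C * dist t t₀ ≤ (C+1) * dist t t₀ := by
          have := dist_nonneg (x := t) (y := t₀); nlinarith
    _ < (C+1) * (εp / (2*(C+1))) := by
          apply mul_lt_mul_of_pos_left hdt2; linarith
    _ = εp / 2 := by field_simp
  calc dist (φ x t) (φ x₀ t₀) ≤ dist (φ x t) (φ x₀ t) + dist (φ x₀ t) (φ x₀ t₀) :=
        dist_triangle _ _ _
  _ ≤ dist x x₀ * B + C * |t - t₀| := add_le_add hgron htime
  _ < εp / 2 + εp / 2 := by linarith
  _ = εp := by ring



variable {n : ℕ}

/-- The matrix as a continuous linear map on Euclidean space. -/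
noncomputable def Acl (A : Matrix (Fin n) (Fin n) ℝ) :
    EuclideanSpace ℝ (Fin n) →L[ℝ] EuclideanSpace ℝ (Fin n) :=
  LinearMap.toContinuousLinearMap (Matrix.toEuclideanLin A)

noncomputable def qA (A : Matrix (Fin n) (Fin n) ℝ) (x : EuclideanSpace ℝ (Fin n)) : ℝ :=
  ⟪Acl A x, x⟫

noncomputable def Pf (f : EuclideanSpace ℝ (Fin n) → ℝ) (x : EuclideanSpace ℝ (Fin n)) : ℝ :=
  ⟪gradient f x, gradient f x⟫

noncomputable def sA (A : Matrix (Fin n) (Fin n) ℝ) (x : EuclideanSpace ℝ (Fin n)) : ℝ :=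
  ⟪Acl A x, Acl A x⟫

noncomputable def qF (f : EuclideanSpace ℝ (Fin n) → ℝ) (A : Matrix (Fin n) (Fin n) ℝ)
    (x : EuclideanSpace ℝ (Fin n)) : ℝ := ⟪gradient f x, Acl A x⟫

noncomputable def Df (f : EuclideanSpace ℝ (Fin n) → ℝ) (A : Matrix (Fin n) (Fin n) ℝ)
    (x : EuclideanSpace ℝ (Fin n)) : ℝ := Pf f x * sA A x - qF f A x ^ 2

noncomputable def theta (c ε u : ℝ) : ℝ :=
  Real.smoothTransition (((7*ε/8)^2 - (u - c)^2) / ((7*ε/8)^2 - (3*ε/4)^2))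

noncomputable def chi (A : Matrix (Fin n) (Fin n) ℝ) (R : ℝ)
    (x : EuclideanSpace ℝ (Fin n)) : ℝ :=
  Real.smoothTransition ((qA A x - 2*R^2) / R^2)

noncomputable def eta (A : Matrix (Fin n) (Fin n) ℝ) (M : ℝ)
    (x : EuclideanSpace ℝ (Fin n)) : ℝ :=
  Real.smoothTransition (M - qA A x)

noncomputable def core (f : EuclideanSpace ℝ (Fin n) → ℝ) (A : Matrix (Fin n) (Fin n) ℝ)
    (R : ℝ) (x : EuclideanSpace ℝ (Fin n)) : EuclideanSpace ℝ (Fin n) :=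
  (Pf f x)⁻¹ • gradient f x +
    (chi A R x * (qF f A x / Df f A x)) • ((qF f A x / Pf f x) • gradient f x - Acl A x)

noncomputable def XM (f : EuclideanSpace ℝ (Fin n) → ℝ) (A : Matrix (Fin n) (Fin n) ℝ)
    (c ε R M : ℝ) (x : EuclideanSpace ℝ (Fin n)) : EuclideanSpace ℝ (Fin n) :=
  (theta c ε (f x) * eta A M x) • core f A R x

section Facts

variable {A : Matrix (Fin n) (Fin n) ℝ} {f : EuclideanSpace ℝ (Fin n) → ℝ} {c ε R M : ℝ}

lemma inner_Acl_comm (hA : A.IsSymm) (x y : EuclideanSpace ℝ (Fin n)) :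
    ⟪Acl A x, y⟫ = ⟪x, Acl A y⟫ := by
  simp only [Acl, LinearMap.coe_toContinuousLinearMap', Matrix.toEuclideanLin_apply,
    PiLp.inner_apply, RCLike.inner_apply, starRingEnd_apply, star_trivial]
  simp only [Matrix.mulVec, dotProduct]
  simp only [Finset.mul_sum, Finset.sum_mul]
  rw [Finset.sum_comm]
  congr 1; funext i; congr 1; funext j
  rw [hA.apply i j]; ring

lemma contDiff_smoothTransition : ContDiff ℝ 1 Real.smoothTransition :=
  Real.smoothTransition.contDiff.of_le (by exact_mod_cast le_top)

lemma contDiff_gradient (hf : ContDiff ℝ 2 f) : ContDiff ℝ 1 (gradient f) := by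
  have h : gradient f = fun x =>
      (InnerProductSpace.toDual ℝ (EuclideanSpace ℝ (Fin n))).symm (fderiv ℝ f x) := rfl
  rw [h]
  exact ((InnerProductSpace.toDual ℝ (EuclideanSpace ℝ (Fin n))).symm.contDiff).comp
    (hf.fderiv_right (by norm_num))

lemma inner_gradient_eq (f : EuclideanSpace ℝ (Fin n) → ℝ) (y u : EuclideanSpace ℝ (Fin n)) :
    ⟪gradient f y, u⟫ = fderiv ℝ f y u :=
  InnerProductSpace.toDual_symm_apply

-- cutoff values
lemma theta_eq_zero (hε : 0 < ε) {u : ℝ} (h : 7*ε/8 ≤ |u - c|) : theta c ε u = 0 := by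
  apply Real.smoothTransition.zero_of_nonpos
  apply div_nonpos_of_nonpos_of_nonneg
  · have h2 : (7*ε/8)^2 ≤ (u - c)^2 := by
      rw [← sq_abs (u - c)]
      exact pow_le_pow_left₀ (by positivity) h 2
    linarith
  · nlinarith

lemma theta_eq_one (hε : 0 < ε) {u : ℝ} (h : |u - c| ≤ 3*ε/4) : theta c ε u = 1 := by
  apply Real.smoothTransition.one_of_one_le
  rw [le_div_iff₀ (by nlinarith)]
  have h2 : (u - c)^2 ≤ (3*ε/4)^2 := by
    rw [← sq_abs (u - c)]
    exact pow_le_pow_left₀ (abs_nonneg _) h 2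
  nlinarith

lemma chi_eq_zero (hR : 0 < R) {x : EuclideanSpace ℝ (Fin n)} (h : qA A x ≤ 2*R^2) :
    chi A R x = 0 := by
  apply Real.smoothTransition.zero_of_nonpos
  apply div_nonpos_of_nonpos_of_nonneg (by linarith) (by positivity)

lemma chi_eq_one (hR : 0 < R) {x : EuclideanSpace ℝ (Fin n)} (h : 3*R^2 ≤ qA A x) :
    chi A R x = 1 := by
  apply Real.smoothTransition.one_of_one_le
  rw [le_div_iff₀ (by positivity)]
  nlinarith

lemma eta_eq_zero {x : EuclideanSpace ℝ (Fin n)} (h : M ≤ qA A x) : eta A M x = 0 :=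
  Real.smoothTransition.zero_of_nonpos (by simp only [sub_nonpos]; exact h)

lemma eta_eq_one {x : EuclideanSpace ℝ (Fin n)} (h : qA A x ≤ M - 1) : eta A M x = 1 :=
  Real.smoothTransition.one_of_one_le (by linarith)

-- positivity
lemma inner_self_pos' {x : EuclideanSpace ℝ (Fin n)} (h : x ≠ 0) : 0 < ⟪x, x⟫ := by
  rw [real_inner_self_eq_norm_sq]
  have h' : 0 < ‖x‖ := norm_pos_iff.2 h
  positivity

lemma Pf_pos' {x : EuclideanSpace ℝ (Fin n)} (h : gradient f x ≠ 0) : 0 < Pf f x :=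
  inner_self_pos' h

lemma qA_pos (hposdef : A.PosDef) {x : EuclideanSpace ℝ (Fin n)} (hx : x ≠ 0) :
    0 < qA A x := by
  have h := hposdef.dotProduct_mulVec_pos (x := (WithLp.equiv 2 (Fin n → ℝ)) x) (by
    intro hc
    exact hx ((WithLp.equiv 2 (Fin n → ℝ)).injective (by rw [hc]; rfl)))
  rw [qA]
  simp only [Acl, LinearMap.coe_toContinuousLinearMap', Matrix.toEuclideanLin_apply,
    PiLp.inner_apply, RCLike.inner_apply, starRingEnd_apply, star_trivial]
  simp only [star_trivial, dotProduct] at h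
  exact h

lemma qA_nonneg (hposdef : A.PosDef) (x : EuclideanSpace ℝ (Fin n)) : 0 ≤ qA A x := by
  rcases eq_or_ne x 0 with rfl | hx
  · simp [qA]
  · exact (qA_pos hposdef hx).le

lemma sA_pos (hposdef : A.PosDef) {x : EuclideanSpace ℝ (Fin n)} (hq : 0 < qA A x) :
    0 < sA A x := by
  apply inner_self_pos'
  intro hc
  rw [qA, hc] at hq
  simp at hq

-- compactness of sublevel sets of qA
lemma qA_smul (a : ℝ) (x : EuclideanSpace ℝ (Fin n)) : qA A (a • x) = a^2 * qA A x := by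
  rw [qA, qA, map_smul, real_inner_smul_left, real_inner_smul_right]
  ring

lemma continuous_qA : Continuous (qA A) :=
  (Acl A).continuous.inner continuous_id

lemma isCompact_qA_le (hposdef : A.PosDef) (M : ℝ) :
    IsCompact {x : EuclideanSpace ℝ (Fin n) | qA A x ≤ M} := by
  have hclosed : IsClosed {x : EuclideanSpace ℝ (Fin n) | qA A x ≤ M} :=
    isClosed_le continuous_qA continuous_const
  rcases isEmpty_or_nonempty (Fin n) with he | hne
  · have hsub : ∀ y : EuclideanSpace ℝ (Fin n), y = 0 := by
      intro y; ext i; exact he.elim i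
    have : {x : EuclideanSpace ℝ (Fin n) | qA A x ≤ M} ⊆ {(0 : EuclideanSpace ℝ (Fin n))} := by
      intro y _; simp [hsub y]
    exact (Set.finite_singleton _).subset this |>.isCompact
  · obtain ⟨i⟩ := hne
    have hy : (EuclideanSpace.single i (1:ℝ)) ∈ Metric.sphere (0 : EuclideanSpace ℝ (Fin n)) 1 := by
      simp [EuclideanSpace.norm_single]
    obtain ⟨z, hz, hmin⟩ := (isCompact_sphere (0 : EuclideanSpace ℝ (Fin n)) 1).exists_isMinOn
      ⟨_, hy⟩ ((continuous_qA (A := A)).continuousOn)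
    have hz0 : z ≠ 0 := by
      intro hc
      rw [hc, mem_sphere_zero_iff_norm] at hz
      simp at hz
    set μ := qA A z with hμ
    have hμ0 : 0 < μ := qA_pos hposdef hz0
    apply IsCompact.of_isClosed_subset (isCompact_closedBall 0 (Real.sqrt (max M 0 / μ)))
      hclosed
    intro x hx
    simp only [mem_setOf_eq] at hx
    simp only [Metric.mem_closedBall, dist_zero_right]
    rcases eq_or_ne x 0 with rfl | hx0
    · simp only [norm_zero]; positivity
    · have hnx : 0 < ‖x‖ := norm_pos_iff.2 hx0
      have hu : (‖x‖⁻¹ • x) ∈ Metric.sphere (0 : EuclideanSpace ℝ (Fin n)) 1 := by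
        simp [norm_smul, abs_of_nonneg (inv_nonneg.2 hnx.le), inv_mul_cancel₀ hnx.ne']
      have h1 : μ ≤ qA A (‖x‖⁻¹ • x) := hmin hu
      rw [qA_smul] at h1
      have h2 : μ * ‖x‖^2 ≤ qA A x := by
        rw [inv_pow] at h1
        have := mul_le_mul_of_nonneg_left h1 (by positivity : (0:ℝ) ≤ ‖x‖^2)
        calc μ * ‖x‖^2 = ‖x‖^2 * μ := by ring
        _ ≤ ‖x‖^2 * ((‖x‖^2)⁻¹ * qA A x) := this
        _ = qA A x := by field_simp
      have h3 : ‖x‖^2 ≤ max M 0 / μ := by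
        rw [le_div_iff₀ hμ0]
        have : qA A x ≤ max M 0 := le_trans hx (le_max_left _ _)
        nlinarith
      calc ‖x‖ = Real.sqrt (‖x‖^2) := by rw [Real.sqrt_sq hnx.le]
      _ ≤ Real.sqrt (max M 0 / μ) := Real.sqrt_le_sqrt h3

end Facts

section Facts2

variable {A : Matrix (Fin n) (Fin n) ℝ} {f : EuclideanSpace ℝ (Fin n) → ℝ} {c ε R M γ : ℝ}

lemma bound_sq (hR : 0 < R) (hposdef : A.PosDef) {x : EuclideanSpace ℝ (Fin n)}
    (hg : gradient f x ≠ 0) (hγ0 : 0 ≤ γ)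
    (hb : |⟪(‖gradient f x‖)⁻¹ • gradient f x, (‖Acl A x‖)⁻¹ • Acl A x⟫| ≤ γ)
    (hq : R^2 ≤ qA A x) : (qF f A x)^2 ≤ γ^2 * (Pf f x * sA A x) := by
  have hq0 : 0 < qA A x := lt_of_lt_of_le (by positivity) hq
  have ha : Acl A x ≠ 0 := by
    intro hc
    rw [qA, hc] at hq0
    simp at hq0
  have hgn : 0 < ‖gradient f x‖ := norm_pos_iff.2 hg
  have han : 0 < ‖Acl A x‖ := norm_pos_iff.2 ha
  rw [real_inner_smul_left, real_inner_smul_right, abs_mul, abs_mul, abs_inv, abs_inv,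
    abs_norm, abs_norm] at hb
  have hb2 : |⟪gradient f x, Acl A x⟫| ≤ γ * (‖gradient f x‖ * ‖Acl A x‖) := by
    have h1 := mul_le_mul_of_nonneg_left hb (le_of_lt (mul_pos hgn han))
    calc |⟪gradient f x, Acl A x⟫|
        = (‖gradient f x‖ * ‖Acl A x‖) * (‖gradient f x‖⁻¹ * (‖Acl A x‖⁻¹ * |⟪gradient f x, Acl A x⟫|)) := by
          field_simp
    _ ≤ (‖gradient f x‖ * ‖Acl A x‖) * γ := h1
    _ = γ * (‖gradient f x‖ * ‖Acl A x‖) := by ring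
  have hP : Pf f x = ‖gradient f x‖^2 := real_inner_self_eq_norm_sq _
  have hs : sA A x = ‖Acl A x‖^2 := real_inner_self_eq_norm_sq _
  have hqf : qF f A x = ⟪gradient f x, Acl A x⟫ := rfl
  rw [hP, hs, hqf]
  have habs : ⟪gradient f x, Acl A x⟫^2 = |⟪gradient f x, Acl A x⟫|^2 := (sq_abs _).symm
  rw [habs]
  nlinarith [abs_nonneg ⟪gradient f x, Acl A x⟫, mul_pos hgn han]

lemma D_pos (hγ : γ ∈ Set.Ioo (0:ℝ) 1) (hR : 0 < R) (hposdef : A.PosDef)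
    {x : EuclideanSpace ℝ (Fin n)} (hg : gradient f x ≠ 0) (hq : R^2 ≤ qA A x)
    (hb2 : (qF f A x)^2 ≤ γ^2 * (Pf f x * sA A x)) : 0 < Df f A x := by
  have hP : 0 < Pf f x := Pf_pos' hg
  have hq0 : 0 < qA A x := lt_of_lt_of_le (by positivity) hq
  have hs : 0 < sA A x := sA_pos hposdef hq0
  have h1 : γ^2 < 1 := by nlinarith [hγ.1, hγ.2]
  rw [Df]
  nlinarith [mul_pos (show (0:ℝ) < 1 - γ^2 by nlinarith [hγ.1, hγ.2]) (mul_pos hP hs)]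

lemma inner_g_core {x : EuclideanSpace ℝ (Fin n)} (hP : Pf f x ≠ 0) :
    ⟪gradient f x, core f A R x⟫ = 1 := by
  rw [core, inner_add_right, real_inner_smul_right, real_inner_smul_right, inner_sub_right,
    real_inner_smul_right]
  rw [show ⟪gradient f x, gradient f x⟫ = Pf f x from rfl,
    show ⟪gradient f x, Acl A x⟫ = qF f A x from rfl]
  field_simp
  simp

lemma inner_a_core {x : EuclideanSpace ℝ (Fin n)} (hP : Pf f x ≠ 0) (hD : Df f A x ≠ 0) :
    ⟪Acl A x, core f A R x⟫ = (1 - chi A R x) * (qF f A x / Pf f x) := by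
  rw [core, inner_add_right, real_inner_smul_right, real_inner_smul_right, inner_sub_right,
    real_inner_smul_right]
  rw [show ⟪Acl A x, gradient f x⟫ = qF f A x from real_inner_comm _ _,
    show ⟪Acl A x, Acl A x⟫ = sA A x from rfl]
  have hD' : Pf f x * sA A x - qF f A x ^ 2 ≠ 0 := hD
  simp only [Df] at *
  field_simp
  ring

lemma X_zero_outside (hε : 0 < ε) {x : EuclideanSpace ℝ (Fin n)} (h : ε ≤ |f x - c|) :
    XM f A c ε R M x = 0 := by
  rw [XM, theta_eq_zero hε (by linarith), zero_mul, zero_smul]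

lemma inner_g_X (hε : 0 < ε)
    (hreg : ∀ x : EuclideanSpace ℝ (Fin n), |f x - c| < ε → gradient f x ≠ 0)
    (x : EuclideanSpace ℝ (Fin n)) :
    ⟪gradient f x, XM f A c ε R M x⟫ = theta c ε (f x) * eta A M x := by
  by_cases hb : |f x - c| < ε
  · rw [XM, real_inner_smul_right, inner_g_core (Pf_pos' (hreg x hb)).ne', mul_one]
  · rw [X_zero_outside hε (not_lt.1 hb), inner_zero_right,
      theta_eq_zero hε (by linarith [not_lt.1 hb]), zero_mul]

lemma inner_a_X (hε : 0 < ε) (hR : 0 < R) (hγ : γ ∈ Set.Ioo (0:ℝ) 1) (hposdef : A.PosDef)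
    (hreg : ∀ x : EuclideanSpace ℝ (Fin n), |f x - c| < ε → gradient f x ≠ 0)
    (hb' : ∀ x : EuclideanSpace ℝ (Fin n), |f x - c| < ε → R^2 ≤ qA A x →
      (qF f A x)^2 ≤ γ^2 * (Pf f x * sA A x))
    {x : EuclideanSpace ℝ (Fin n)} (h3 : 3*R^2 ≤ qA A x) :
    ⟪Acl A x, XM f A c ε R M x⟫ = 0 := by
  by_cases hb : |f x - c| < ε
  · have hq : R^2 ≤ qA A x := by nlinarith
    have hP := Pf_pos' (hreg x hb)
    have hD := D_pos hγ hR hposdef (hreg x hb) hq (hb' x hb hq)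
    rw [XM, real_inner_smul_right, inner_a_core hP.ne' hD.ne', chi_eq_one hR h3]
    simp
  · rw [X_zero_outside hε (not_lt.1 hb), inner_zero_right]

-- smoothness of the components
lemma contDiff_qA' : ContDiff ℝ 1 (qA A) :=
  ContDiff.inner ℝ (Acl A).contDiff contDiff_id

lemma contDiff_Pf (hf : ContDiff ℝ 2 f) : ContDiff ℝ 1 (Pf f) :=
  ContDiff.inner ℝ (contDiff_gradient hf) (contDiff_gradient hf)

lemma contDiff_sA' : ContDiff ℝ 1 (sA A) :=
  ContDiff.inner ℝ (Acl A).contDiff (Acl A).contDiff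

lemma contDiff_qF (hf : ContDiff ℝ 2 f) : ContDiff ℝ 1 (qF f A) :=
  ContDiff.inner ℝ (contDiff_gradient hf) (Acl A).contDiff

lemma contDiff_Df (hf : ContDiff ℝ 2 f) : ContDiff ℝ 1 (Df f A) :=
  ((contDiff_Pf hf).mul contDiff_sA').sub ((contDiff_qF hf).pow 2)

lemma contDiff_theta_f (hf : ContDiff ℝ 2 f) :
    ContDiff ℝ 1 (fun x => theta c ε (f x)) :=
  contDiff_smoothTransition.comp
    ((contDiff_const.sub (((hf.of_le (by norm_num)).sub contDiff_const).pow 2)).div_const _)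

lemma contDiff_eta : ContDiff ℝ 1 (eta A M) :=
  contDiff_smoothTransition.comp (contDiff_const.sub contDiff_qA')

lemma contDiff_chi : ContDiff ℝ 1 (chi A R) :=
  contDiff_smoothTransition.comp ((contDiff_qA'.sub contDiff_const).div_const _)

lemma contDiff_XM (hf : ContDiff ℝ 2 f) (hε : 0 < ε) (hR : 0 < R)
    (hγ : γ ∈ Set.Ioo (0:ℝ) 1) (hposdef : A.PosDef)
    (hreg : ∀ x : EuclideanSpace ℝ (Fin n), |f x - c| < ε → gradient f x ≠ 0)
    (hb' : ∀ x : EuclideanSpace ℝ (Fin n), |f x - c| < ε → R^2 ≤ qA A x →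
      (qF f A x)^2 ≤ γ^2 * (Pf f x * sA A x)) :
    ContDiff ℝ 1 (XM f A c ε R M) := by
  rw [contDiff_iff_contDiffAt]
  intro x₀
  have hfc : Continuous f := hf.continuous
  by_cases hband : |f x₀ - c| < ε
  · have hP : Pf f x₀ ≠ 0 := (Pf_pos' (hreg x₀ hband)).ne'
    by_cases hq : qA A x₀ < 2*R^2
    · -- small region: chi vanishes nearby
      have hopen : IsOpen {x : EuclideanSpace ℝ (Fin n) | qA A x < 2*R^2} :=
        isOpen_lt continuous_qA continuous_const
      have hev : XM f A c ε R M =ᶠ[𝓝 x₀]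
          fun x => (theta c ε (f x) * eta A M x) • ((Pf f x)⁻¹ • gradient f x) := by
        filter_upwards [hopen.mem_nhds hq] with x hx
        rw [XM, core, chi_eq_zero hR (le_of_lt hx), zero_mul, zero_smul, add_zero]
      apply ContDiffAt.congr_of_eventuallyEq ?_ hev
      exact (((contDiff_theta_f hf).contDiffAt.mul contDiff_eta.contDiffAt).smul
        (((contDiff_Pf hf).contDiffAt.inv hP).smul (contDiff_gradient hf).contDiffAt))
    · -- large region: full formula is smooth
      have hq2 : R^2 ≤ qA A x₀ := by nlinarith [not_lt.1 hq]
      have hD : Df f A x₀ ≠ 0 :=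
        (D_pos hγ hR hposdef (hreg x₀ hband) hq2 (hb' x₀ hband hq2)).ne'
      exact ((contDiff_theta_f hf).contDiffAt.mul contDiff_eta.contDiffAt).smul
        ((((contDiff_Pf hf).contDiffAt.inv hP).smul (contDiff_gradient hf).contDiffAt).add
          ((contDiff_chi.contDiffAt.mul
            ((contDiff_qF hf).contDiffAt.div (contDiff_Df hf).contDiffAt hD)).smul
            ((((contDiff_qF hf).contDiffAt.div (contDiff_Pf hf).contDiffAt hP).smul
              (contDiff_gradient hf).contDiffAt).sub (Acl A).contDiff.contDiffAt)))
  · -- outside the band: X vanishes nearby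
    have hopen : IsOpen {x : EuclideanSpace ℝ (Fin n) | 7*ε/8 < |f x - c|} :=
      isOpen_lt continuous_const (continuous_abs.comp (hfc.sub continuous_const))
    have hx₀ : 7*ε/8 < |f x₀ - c| := by
      have := not_lt.1 hband; linarith
    have hev : XM f A c ε R M =ᶠ[𝓝 x₀] fun _ => (0 : EuclideanSpace ℝ (Fin n)) := by
      filter_upwards [hopen.mem_nhds hx₀] with x hx
      rw [XM, theta_eq_zero hε (le_of_lt hx), zero_mul, zero_smul]
    exact contDiffAt_const.congr_of_eventuallyEq hev

lemma hasCompactSupport_XM (hε : 0 < ε) (hposdef : A.PosDef) (hfc : Continuous f) :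
    HasCompactSupport (XM f A c ε R M) := by
  apply HasCompactSupport.intro ((isCompact_qA_le hposdef M).inter_right
    (isClosed_le ((hfc.sub continuous_const).pow 2) continuous_const :
      IsClosed {x : EuclideanSpace ℝ (Fin n) | (f x - c)^2 ≤ (7*ε/8)^2}))
  intro x hx
  rw [Set.mem_inter_iff, not_and_or] at hx
  rcases hx with h | h
  · have h' : M < qA A x := not_le.1 (by simpa using h)
    rw [XM, eta_eq_zero (le_of_lt h'), mul_zero, zero_smul]
  · have h' : (7*ε/8)^2 < (f x - c)^2 := not_le.1 (by simpa using h)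
    have h2 : 7*ε/8 ≤ |f x - c| := by
      have := Real.sqrt_le_sqrt (le_of_lt h')
      rwa [Real.sqrt_sq (by positivity), Real.sqrt_sq_eq_abs] at this
    rw [XM, theta_eq_zero hε h2, zero_mul, zero_smul]

end Facts2

section Part4

variable {A : Matrix (Fin n) (Fin n) ℝ} {f : EuclideanSpace ℝ (Fin n) → ℝ} {c ε R M γ : ℝ}

lemma barrier_aux {m d : ℝ → ℝ} {B : ℝ} (hm : ∀ t, HasDerivAt m (d t) t)
    (hd : ∀ t, B ≤ m t → d t = 0) {t : ℝ} (ht : 0 ≤ t) : m t ≤ max B (m 0) := by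
  by_contra hcon
  push_neg at hcon
  have hmcont : Continuous m := by
    rw [continuous_iff_continuousAt]; exact fun u => (hm u).continuousAt
  have ht0 : 0 < t := by
    rcases eq_or_lt_of_le ht with rfl | h
    · exact absurd hcon (not_lt.2 (le_max_right _ _))
    · exact h
  set S := {u : ℝ | u ∈ Icc 0 t ∧ m u ≤ max B (m 0)} with hS
  have hS0 : (0:ℝ) ∈ S := ⟨⟨le_rfl, ht⟩, le_max_right _ _⟩
  have hSb : BddAbove S := ⟨t, fun u hu => hu.1.2⟩
  have hScl : IsClosed S :=
    (isClosed_Icc.inter (isClosed_le hmcont continuous_const))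
  set s := sSup S with hs
  have hsS : s ∈ S := hScl.csSup_mem ⟨0, hS0⟩ hSb
  have hst : s < t := by
    rcases eq_or_lt_of_le hsS.1.2 with h | h
    · exfalso; have h2 := hsS.2; rw [h] at h2; linarith
    · exact h
  have hs0 : 0 ≤ s := hsS.1.1
  have hgt : ∀ u, u ∈ Ioc s t → max B (m 0) < m u := by
    intro u hu
    by_contra hc
    push_neg at hc
    have huS : u ∈ S := ⟨⟨le_trans hs0 hu.1.le, hu.2⟩, hc⟩
    have : u ≤ s := le_csSup hSb huS
    exact absurd hu.1 (not_lt.2 this)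
  have hconst : ∀ s' ∈ Ioc s t, m t = m s' := by
    intro s' hs'
    have h0 : ∀ u ∈ Ico s' t, HasDerivWithinAt m 0 (Ici u) u := by
      intro u hu
      have hu' : u ∈ Ioc s t := ⟨lt_of_lt_of_le hs'.1 hu.1, hu.2.le⟩
      have hd0 : d u = 0 := hd u (le_trans (le_max_left _ _) (hgt u hu').le)
      simpa [hd0] using (hm u).hasDerivWithinAt
    exact constant_of_has_deriv_right_zero (hmcont.continuousOn) h0 t ⟨hs'.2, le_rfl⟩
  have hlim : Tendsto m (𝓝[>] s) (𝓝 (m s)) :=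
    (hmcont.continuousAt).continuousWithinAt
  have heq : m =ᶠ[𝓝[>] s] fun _ => m t := by
    filter_upwards [Ioc_mem_nhdsGT_of_mem ⟨le_rfl, hst⟩] with u hu using (hconst u hu).symm
  have hlim2 : Tendsto m (𝓝[>] s) (𝓝 (m t)) := by
    rw [Filter.tendsto_congr' heq]; exact tendsto_const_nhds
  have : m s = m t := tendsto_nhds_unique hlim hlim2
  have h2 := hsS.2
  linarith

lemma barrier {m d : ℝ → ℝ} {B : ℝ} (hm : ∀ t, HasDerivAt m (d t) t)
    (hd : ∀ t, B ≤ m t → d t = 0) (t : ℝ) : m t ≤ max B (m 0) := by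
  rcases le_total 0 t with h | h
  · exact barrier_aux hm hd h
  · have hm' : ∀ u, HasDerivAt (fun w => m (-w)) (-(d (-u))) u := by
      intro u
      have h1 := HasDerivAt.scomp u (hm (-u)) (hasDerivAt_neg u)
      simp only [neg_smul, one_smul] at h1
      exact h1
    have hd' : ∀ u, B ≤ m (-u) → -(d (-u)) = 0 := fun u hu => by rw [hd (-u) hu]; ring
    have key := barrier_aux (m := fun w => m (-w)) (d := fun u => -(d (-u))) hm' hd'
      (t := -t) (by linarith)
    simpa using key

lemma hasDerivAt_qA_comp (hA : A.IsSymm) {γ : ℝ → EuclideanSpace ℝ (Fin n)}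
    {γ' : EuclideanSpace ℝ (Fin n)} {t : ℝ} (h : HasDerivAt γ γ' t) :
    HasDerivAt (fun u => qA A (γ u)) (2 * ⟪Acl A (γ t), γ'⟫) t := by
  have h1 : HasDerivAt (fun u => Acl A (γ u)) (Acl A γ') t :=
    ((Acl A).hasFDerivAt).comp_hasDerivAt t h
  have h2 := HasDerivAt.inner ℝ h1 h
  have h3 : ⟪Acl A (γ t), γ'⟫ + ⟪Acl A γ', γ t⟫ = 2 * ⟪Acl A (γ t), γ'⟫ := by
    rw [show ⟪Acl A γ', γ t⟫ = ⟪γ', Acl A (γ t)⟫ from inner_Acl_comm hA _ _,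
      real_inner_comm (γ' ) (Acl A (γ t))]
    ring
  rw [h3] at h2
  exact h2

lemma hasDerivAt_f_comp (hf : ContDiff ℝ 2 f) {γ : ℝ → EuclideanSpace ℝ (Fin n)}
    {γ' : EuclideanSpace ℝ (Fin n)} {t : ℝ} (h : HasDerivAt γ γ' t) :
    HasDerivAt (fun u => f (γ u)) ⟪gradient f (γ t), γ'⟫ t := by
  have hdf : HasFDerivAt f (fderiv ℝ f (γ t)) (γ t) :=
    ((hf.differentiable (by norm_num)) (γ t)).hasFDerivAt
  have h2 := hdf.comp_hasDerivAt t h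
  rw [inner_gradient_eq]
  exact h2

lemma theta_lipschitz (hε : 0 < ε) : ∃ K : NNReal, LipschitzWith K (theta c ε) := by
  have hcd : ContDiff ℝ 1 (theta c ε) :=
    contDiff_smoothTransition.comp
      ((contDiff_const.sub ((contDiff_id.sub contDiff_const).pow 2)).div_const _)
  have hsupp : HasCompactSupport (theta c ε) := by
    apply HasCompactSupport.intro (isCompact_Icc (a := c - ε) (b := c + ε))
    intro u hu
    have h' : ε ≤ |u - c| := by
      rw [mem_Icc, not_and_or] at hu
      rcases hu with h | h
      · push_neg at h; rw [abs_sub_comm, abs_of_pos (by linarith)]; linarith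
      · push_neg at h; rw [abs_of_pos (by linarith)]; linarith
    exact theta_eq_zero hε (by linarith)
  obtain ⟨C, hC⟩ := ((hcd.continuous_deriv le_rfl)).bounded_above_of_compact_support
    (hsupp.deriv)
  refine ⟨⟨max C 0, le_max_right _ _⟩, ?_⟩
  apply lipschitzWith_of_nnnorm_deriv_le (hcd.differentiable one_ne_zero)
  intro x
  refine NNReal.coe_le_coe.1 ?_
  exact le_trans (hC x) (le_max_left _ _)

lemma exists_lip_bound (hf : ContDiff ℝ 2 f) (hε : 0 < ε) (hR : 0 < R)
    (hγ : γ ∈ Set.Ioo (0:ℝ) 1) (hposdef : A.PosDef)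
    (hreg : ∀ x : EuclideanSpace ℝ (Fin n), |f x - c| < ε → gradient f x ≠ 0)
    (hb' : ∀ x : EuclideanSpace ℝ (Fin n), |f x - c| < ε → R^2 ≤ qA A x →
      (qF f A x)^2 ≤ γ^2 * (Pf f x * sA A x)) (M : ℝ) :
    ∃ (K : NNReal) (C : ℝ), 0 ≤ C ∧ LipschitzWith K (XM f A c ε R M) ∧
      ∀ x, ‖XM f A c ε R M x‖ ≤ C := by
  have hcd := contDiff_XM (M := M) hf hε hR hγ hposdef hreg hb'
  have hsupp : HasCompactSupport (XM f A c ε R M) :=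
    hasCompactSupport_XM hε hposdef hf.continuous
  obtain ⟨C, hC⟩ := (hcd.continuous).bounded_above_of_compact_support hsupp
  obtain ⟨C', hC'⟩ := (hcd.continuous_fderiv one_ne_zero).bounded_above_of_compact_support
    (HasCompactSupport.fderiv ℝ hsupp)
  refine ⟨⟨max C' 0, le_max_right _ _⟩, max C 0, le_max_right _ _, ?_,
    fun x => le_trans (hC x) (le_max_left _ _)⟩
  apply lipschitzWith_of_nnnorm_fderiv_le (hcd.differentiable one_ne_zero)
  intro x
  refine NNReal.coe_le_coe.1 ?_
  exact le_trans (hC' x) (le_max_left _ _)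

end Part4



end Statement14Aux

open Filter Topology Statement14Aux
open scoped RealInnerProductSpace

/-- Let `f : ℝⁿ → ℝ` be `C²`, `c ∈ ℝ`, `ε > 0`, with `∇f(x) ≠ 0` whenever `|f(x) − c| < ε`.
Suppose there are a symmetric positive definite matrix `A`, `γ ∈ (0,1)` and `R > 0` such that
`|⟨∇f(x)/‖∇f(x)‖, Ax/‖Ax‖⟩| ≤ γ` whenever `|f(x) − c| < ε` and `⟨Ax, x⟩^{1/2} ≥ R`.
Then `f` is locally trivial over a neighbourhood of `c`: there are `0 < δ ≤ ε` and a
homeomorphism `Φ : f⁻¹((c−δ, c+δ)) ≃ (c−δ, c+δ) × f⁻¹(c)` whose first component is `f`;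
in particular `c` is not a bifurcation value of `f`. -/
theorem statement14 {n : ℕ} (f : EuclideanSpace ℝ (Fin n) → ℝ) (hf : ContDiff ℝ 2 f)
    (c ε : ℝ) (hε : 0 < ε)
    (hreg : ∀ x : EuclideanSpace ℝ (Fin n), |f x - c| < ε → gradient f x ≠ 0)
    (A : Matrix (Fin n) (Fin n) ℝ) (hsymm : A.IsSymm) (hposdef : A.PosDef)
    (γ : ℝ) (hγ : γ ∈ Set.Ioo (0:ℝ) 1) (R : ℝ) (hR : 0 < R)
    (hbound : ∀ x : EuclideanSpace ℝ (Fin n), |f x - c| < ε →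
      R ≤ Real.sqrt ⟪matApply A x, x⟫ →
      |⟪(‖gradient f x‖)⁻¹ • gradient f x, (‖matApply A x‖)⁻¹ • matApply A x⟫| ≤ γ) :
    ∃ δ : ℝ, 0 < δ ∧ δ ≤ ε ∧
      ∃ Φ : {x : EuclideanSpace ℝ (Fin n) // f x ∈ Set.Ioo (c - δ) (c + δ)} ≃ₜ
             (Set.Ioo (c - δ) (c + δ)) × {x : EuclideanSpace ℝ (Fin n) // f x = c},
        ∀ x, ((Φ x).1 : ℝ) = f x.1 := by
  classical
  -- translate the bound hypothesis
  have hb' : ∀ x : EuclideanSpace ℝ (Fin n), |f x - c| < ε → R^2 ≤ qA A x →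
      (qF f A x)^2 ≤ γ^2 * (Pf f x * sA A x) := by
    intro x hx hq
    apply bound_sq hR hposdef (hreg x hx) hγ.1.le ?_ hq
    have hs : R ≤ Real.sqrt ⟪matApply A x, x⟫ := by
      rw [show (⟪matApply A x, x⟫ : ℝ) = qA A x from rfl,
        Real.le_sqrt hR.le (qA_nonneg hposdef x)]
      exact hq
    exact hbound x hx hs
  -- Lipschitz constants, bounds and flows
  choose KM CM hC0 hlip hbnd using exists_lip_bound hf hε hR hγ hposdef hreg hb'
  choose φ hφ0 hφd using fun (M : ℝ) (x : EuclideanSpace ℝ (Fin n)) =>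
    exists_global_sol (hlip M) (hbnd M) (hC0 M) x
  -- invariance of the ellipsoid size along the flow
  have hINV : ∀ (M : ℝ) x (t : ℝ), qA A (φ M x t) ≤ max (3*R^2) (qA A x) := by
    intro M x t
    have hm : ∀ u, HasDerivAt (fun w => qA A (φ M x w))
        ((fun u => 2 * ⟪Acl A (φ M x u), XM f A c ε R M (φ M x u)⟫) u) u :=
      fun u => hasDerivAt_qA_comp hsymm (hφd M x u)
    have hd : ∀ u, 3*R^2 ≤ (fun w => qA A (φ M x w)) u →
        (fun u => 2 * ⟪Acl A (φ M x u), XM f A c ε R M (φ M x u)⟫) u = 0 := by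
      intro u hu
      simp only
      rw [inner_a_X hε hR hγ hposdef hreg hb' hu, mul_zero]
    have key := barrier hm hd t
    simpa [hφ0] using key
  -- group law
  have hGRP : ∀ (M : ℝ) x (t s : ℝ), φ M (φ M x t) s = φ M x (t + s) := by
    intro M x t s
    apply global_sol_unique (hlip M) (hφd M (φ M x t))
      (fun u => HasDerivAt.comp_const_add t u (hφd M x (t + u)))
    rw [hφ0, add_zero]
  -- level sets move linearly
  obtain ⟨Kθ, hθlip⟩ := theta_lipschitz (c := c) hε
  have hLEV : ∀ (M : ℝ) x, max (3*R^2) (qA A x) ≤ M - 1 → |f x - c| < 3*ε/4 →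
      ∀ t ∈ Set.Icc (c - 3*ε/4 - f x) (c + 3*ε/4 - f x), f (φ M x t) = f x + t := by
    intro M x hM hfx t ht
    have habs := abs_lt.1 hfx
    have hu : ∀ u, HasDerivAt (fun w => f (φ M x w)) (theta c ε (f (φ M x u))) u := by
      intro u
      have h1 := hasDerivAt_f_comp hf (hφd M x u)
      rw [inner_g_X hε hreg, eta_eq_one (le_trans (hINV M x u) hM), mul_one] at h1
      exact h1
    have key : Set.EqOn (fun w => f (φ M x w)) (fun w => f x + w)
        (Set.Icc (c - 3*ε/4 - f x) (c + 3*ε/4 - f x)) := by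
      apply ODE_solution_unique_of_mem_Icc (v := fun _ y => theta c ε y)
        (s := fun _ => Set.univ) (g := fun w => f x + w)
        (fun _ _ => hθlip.lipschitzOnWith) (t₀ := 0)
        ⟨by linarith [habs.1], by linarith [habs.2]⟩
        (fun u _ => (hu u).continuousAt.continuousWithinAt)
        (fun u _ => hu u) (fun _ _ => trivial)
        (continuous_const.add continuous_id).continuousOn
        ?_ (fun _ _ => trivial) ?_
      · intro u hu'
        have h1 : HasDerivAt (fun w : ℝ => f x + w) 1 u := (hasDerivAt_id u).const_add (f x)
        have h2 : theta c ε (f x + u) = 1 := by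
          apply theta_eq_one hε
          rw [abs_le]
          constructor
          · linarith [hu'.1]
          · linarith [hu'.2]
        show HasDerivAt (fun w : ℝ => f x + w) (theta c ε (f x + u)) u
        rw [h2]
        exact h1
      · simp only [hφ0, add_zero]
    have h3 := key ht
    simpa using h3
  -- agreement of flows for different cut-offs
  have hAGR : ∀ (M M' : ℝ) x, max (3*R^2) (qA A x) ≤ M - 1 →
      max (3*R^2) (qA A x) ≤ M' - 1 → ∀ t, φ M x t = φ M' x t := by
    intro M M' x h1 h2 t
    apply global_sol_unique (hlip M') ?_ (hφd M' x) ?_ t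
    · intro u
      have h3 := hφd M x u
      rwa [show XM f A c ε R M (φ M x u) = XM f A c ε R M' (φ M x u) by
        rw [XM, XM, eta_eq_one (le_trans (hINV M x u) h1),
          eta_eq_one (le_trans (hINV M x u) h2)]] at h3
    · rw [hφ0, hφ0]
  -- the combined flow
  set Mx : EuclideanSpace ℝ (Fin n) → ℝ := fun x => max (4*R^2) (qA A x) + 1 with hMx
  have hMxcond : ∀ x, max (3*R^2) (qA A x) ≤ Mx x - 1 := by
    intro x
    rw [hMx]
    simp only [add_sub_cancel_right]
    exact max_le (le_trans (by nlinarith) (le_max_left _ _)) (le_max_right _ _)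
  set Ψ : ℝ → EuclideanSpace ℝ (Fin n) → EuclideanSpace ℝ (Fin n) :=
    fun t x => φ (Mx x) x t with hΨ
  have hΨ0 : ∀ x, Ψ 0 x = x := fun x => hφ0 _ x
  have hΨLEV : ∀ x, |f x - c| < 3*ε/4 →
      ∀ t ∈ Set.Icc (c - 3*ε/4 - f x) (c + 3*ε/4 - f x), f (Ψ t x) = f x + t :=
    fun x hx => hLEV _ x (hMxcond x) hx
  have hΨco : ∀ x (t s : ℝ), Ψ s (Ψ t x) = Ψ (t + s) x := by
    intro x t s
    have hy : qA A (φ (Mx x) x t) ≤ max (3*R^2) (qA A x) := hINV _ x t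
    have h2 : max (3*R^2) (qA A (φ (Mx x) x t)) ≤ Mx x - 1 := by
      apply max_le
      · exact le_trans (le_max_left _ _) (hMxcond x)
      · exact le_trans hy (hMxcond x)
    show φ (Mx (φ (Mx x) x t)) (φ (Mx x) x t) s = φ (Mx x) x (t + s)
    rw [hAGR (Mx (φ (Mx x) x t)) (Mx x) (φ (Mx x) x t) (hMxcond _) h2 s]
    exact hGRP (Mx x) x t s
  have hΨcont : Continuous fun p : ℝ × EuclideanSpace ℝ (Fin n) => Ψ p.1 p.2 := by
    rw [continuous_iff_continuousAt]
    rintro ⟨t₀, x₀⟩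
    set M₀ : ℝ := max (4*R^2) (qA A x₀ + 1) + 1 with hM₀
    have hflow : Continuous fun p : ℝ × EuclideanSpace ℝ (Fin n) => φ M₀ p.2 p.1 :=
      flow_cont (hlip M₀) (hbnd M₀) (hC0 M₀) (hφd M₀) (hφ0 M₀)
    apply (hflow.continuousAt).congr
    have hopen : IsOpen {p : ℝ × EuclideanSpace ℝ (Fin n) | qA A p.2 < qA A x₀ + 1} :=
      isOpen_lt (continuous_qA.comp continuous_snd) continuous_const
    have hmem : (t₀, x₀) ∈ {p : ℝ × EuclideanSpace ℝ (Fin n) | qA A p.2 < qA A x₀ + 1} := by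
      simp only [Set.mem_setOf_eq]; linarith
    filter_upwards [hopen.mem_nhds hmem] with p hp
    have hcond : max (3*R^2) (qA A p.2) ≤ M₀ - 1 := by
      rw [hM₀]
      simp only [add_sub_cancel_right]
      apply max_le (le_trans (by nlinarith) (le_max_left _ _))
      exact le_trans (le_of_lt hp) (le_max_right _ _)
    exact (hAGR (Mx p.2) M₀ p.2 (hMxcond p.2) hcond p.1).symm
  -- membership lemmas
  have hTmem : ∀ x : EuclideanSpace ℝ (Fin n), f x ∈ Set.Ioo (c - ε/2) (c + ε/2) →
      f (Ψ (c - f x) x) = c := by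
    intro x hx
    have habs : |f x - c| < 3*ε/4 := by
      rw [abs_lt]; exact ⟨by linarith [hx.1], by linarith [hx.2]⟩
    have h1 := hΨLEV x habs (c - f x) ⟨by linarith, by linarith⟩
    rw [h1]; ring
  have hSmem : ∀ (t : ℝ) (y : EuclideanSpace ℝ (Fin n)), f y = c →
      t ∈ Set.Ioo (c - ε/2) (c + ε/2) → f (Ψ (t - c) y) = t := by
    intro t y hy ht
    have habs : |f y - c| < 3*ε/4 := by rw [hy]; simp; linarith
    have h1 := hΨLEV y habs (t - c)
      ⟨by rw [hy]; linarith [ht.1], by rw [hy]; linarith [ht.2]⟩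
    rw [h1, hy]; ring
  refine ⟨ε/2, by linarith, by linarith, ?_⟩
  refine ⟨Homeomorph.mk (Equiv.mk
    (fun x => (⟨f x.1, x.2⟩, ⟨Ψ (c - f x.1) x.1, hTmem x.1 x.2⟩))
    (fun p => ⟨Ψ ((p.1 : ℝ) - c) p.2.1, by
      rw [Set.mem_Ioo] at *
      rw [hSmem (p.1 : ℝ) p.2.1 p.2.2 p.1.2]
      exact p.1.2⟩)
    ?_ ?_) ?_ ?_, fun x => rfl⟩
  · -- left inverse
    rintro ⟨x, hx⟩
    apply Subtype.ext
    show Ψ (f x - c) (Ψ (c - f x) x) = x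
    rw [hΨco x (c - f x) (f x - c), show (c - f x) + (f x - c) = 0 by ring, hΨ0]
  · -- right inverse
    rintro ⟨t, y⟩
    have hfz : f (Ψ ((t : ℝ) - c) y.1) = t := hSmem t y.1 y.2 t.2
    apply Prod.ext
    · apply Subtype.ext
      exact hfz
    · apply Subtype.ext
      show Ψ (c - f (Ψ ((t : ℝ) - c) y.1)) (Ψ ((t : ℝ) - c) y.1) = y.1
      rw [hfz, hΨco y.1 ((t : ℝ) - c) (c - t), show ((t : ℝ) - c) + (c - t) = 0 by ring, hΨ0]
  · -- continuity of toFun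
    apply Continuous.prodMk
    · exact (hf.continuous.comp continuous_subtype_val).subtype_mk _
    · exact (hΨcont.comp ((continuous_const.sub
        (hf.continuous.comp continuous_subtype_val)).prodMk continuous_subtype_val)).subtype_mk _
  · -- continuity of invFun
    exact (hΨcont.comp (((continuous_subtype_val.comp continuous_fst).sub
      continuous_const).prodMk (continuous_subtype_val.comp continuous_snd))).subtype_mk _
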